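/- Every eigenfunction of the flat Klein bottle K_1 with eigenvalue 2, i.e. every function of the form u(x,y) = (A cos x + B sin x) sin y with (A,B) ≠ (0,0), has exactly two nodal domains on K_1; consequently the eigenvalue λ₃(K_1) = 2 is not Courant-sharp. -/

import Mathlib

open Real

/-- The identification relation on `ℝ²` defining the flat Klein bottle `K_1`
(`a = b = 2π`): `(x,y) ↦ (x + kπ, (−1)^k y + 2πl)`, `k, l ∈ ℤ`. -/
def kleinRel (p q : ℝ × ℝ) : Prop :=
  ∃ k l : ℤ, q.1 = p.1 + k * π ∧ q.2 = (-1 : ℝ) ^ k * p.2 + 2 * π * l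

/-- The flat Klein bottle `K_1` as a quotient topological space. -/
def KleinBottle : Type := Quot kleinRel

instance : TopologicalSpace KleinBottle :=
  (instTopologicalSpaceQuot : TopologicalSpace (Quot kleinRel))

/-- Any real with positive sine can be shifted by an integer multiple of `2π` into `(0, π)`. -/
lemma exists_int_shift_sin_pos {t : ℝ} (h : 0 < Real.sin t) :
    ∃ m : ℤ, t - 2 * π * m ∈ Set.Ioo (0 : ℝ) π := by
  have h2π : (0 : ℝ) < 2 * π := by positivity
  refine ⟨⌊t / (2 * π)⌋, ?_⟩
  have hlo : 0 ≤ t - ⌊t / (2 * π)⌋ * (2 * π) := Int.sub_floor_div_mul_nonneg t h2π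
  have hhi : t - ⌊t / (2 * π)⌋ * (2 * π) < 2 * π := Int.sub_floor_div_mul_lt t h2π
  set m : ℤ := ⌊t / (2 * π)⌋ with hm
  have hsin : Real.sin (t - 2 * π * m) = Real.sin t := by
    rw [show t - 2 * π * m = t + (-m : ℤ) * (2 * π) by push_cast; ring,
      Real.sin_add_int_mul_two_pi]
  constructor
  · rcases eq_or_lt_of_le (show (0:ℝ) ≤ t - 2 * π * m by linarith) with h' | h'
    · exfalso
      rw [← h', Real.sin_zero] at hsin
      linarith
    · exact h'
  · by_contra hc
    push_neg at hc
    have hs : 0 ≤ Real.sin (t - 2 * π * m - π) :=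
      Real.sin_nonneg_of_nonneg_of_le_pi (by linarith) (by linarith)
    have h2 := Real.sin_add_pi (t - 2 * π * m - π)
    rw [sub_add_cancel] at h2
    linarith

/-- Main auxiliary result: the open set where `(A cos x + B sin x) sin y ≠ 0` projects in the
Klein bottle to a set with exactly two connected components, provided
`A cos x + B sin x = R sin (x − a)` with `R > 0`. -/
lemma klein_two_components (A B R a : ℝ) (hR : 0 < R)
    (hg : ∀ x : ℝ, A * Real.cos x + B * Real.sin x = R * Real.sin (x - a)) :
    Nat.card (ConnectedComponents
        ↥(Quot.mk kleinRel ''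
          {p : ℝ × ℝ | (A * Real.cos p.1 + B * Real.sin p.1) * Real.sin p.2 ≠ 0})) = 2 := by
  let f : ℝ × ℝ → ℝ := fun p => (A * Real.cos p.1 + B * Real.sin p.1) * Real.sin p.2
  have hfval : ∀ p : ℝ × ℝ, f p = R * (Real.sin (p.1 - a) * Real.sin p.2) := by
    intro p
    show (A * Real.cos p.1 + B * Real.sin p.1) * Real.sin p.2 = _
    rw [hg]; ring
  -- invariance of f under the Klein relation
  have hinv : ∀ p q : ℝ × ℝ, kleinRel p q → f p = f q := by
    rintro ⟨x, y⟩ ⟨x', y'⟩ ⟨k, l, h1, h2⟩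
    dsimp only at h1 h2
    subst h1; subst h2
    rw [hfval, hfval]
    dsimp only
    have e1 : Real.sin (x + k * π - a) = (-1 : ℝ) ^ k * Real.sin (x - a) := by
      rw [show x + k * π - a = (x - a) + k * π by ring, Real.sin_add_int_mul_pi]
    rcases Int.even_or_odd k with hk | hk
    · have hk1 : ((-1 : ℝ)) ^ k = 1 := Even.neg_one_zpow hk
      have e2 : Real.sin ((-1 : ℝ) ^ k * y + 2 * π * l) = Real.sin y := by
        rw [hk1, show (1 : ℝ) * y + 2 * π * l = y + (l : ℝ) * (2 * π) by ring,
          Real.sin_add_int_mul_two_pi]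
      rw [e1, e2, hk1]; ring
    · have hk1 : ((-1 : ℝ)) ^ k = -1 := Odd.neg_one_zpow hk
      have e2 : Real.sin ((-1 : ℝ) ^ k * y + 2 * π * l) = -Real.sin y := by
        rw [hk1, show (-1 : ℝ) * y + 2 * π * l = -y + (l : ℝ) * (2 * π) by ring,
          Real.sin_add_int_mul_two_pi, Real.sin_neg]
      rw [e1, e2, hk1]; ring
  -- the induced continuous function on the Klein bottle
  let U : KleinBottle → ℝ := Quot.lift f hinv
  have hfc : Continuous f := by
    apply Continuous.mul
    · exact ((continuous_const.mul (Real.continuous_cos.comp continuous_fst)).add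
        (continuous_const.mul (Real.continuous_sin.comp continuous_fst)))
    · exact Real.continuous_sin.comp continuous_snd
  have hUc : Continuous U := continuous_quot_lift hinv hfc
  -- the positive and negative rectangles
  set P : Set (ℝ × ℝ) := Set.Ioo a (a + π) ×ˢ Set.Ioo (0 : ℝ) π with hPdef
  set N : Set (ℝ × ℝ) := Set.Ioo a (a + π) ×ˢ Set.Ioo (-π) (0 : ℝ) with hNdef
  -- image of the positivity set is the image of P
  have himP : Quot.mk kleinRel '' {p : ℝ × ℝ | 0 < f p} = Quot.mk kleinRel '' P := by
    apply Set.Subset.antisymm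
    · rintro _ ⟨⟨x, y⟩, hp, rfl⟩
      have h0 : 0 < Real.sin (x - a) * Real.sin y := by
        have h1 : 0 < f (x, y) := hp
        rw [hfval (x, y)] at h1
        dsimp only at h1
        nlinarith [h1, hR]
      rcases mul_pos_iff.mp h0 with ⟨hs, hy⟩ | ⟨hs, hy⟩
      · obtain ⟨m, hm⟩ := exists_int_shift_sin_pos hs
        obtain ⟨n, hn⟩ := exists_int_shift_sin_pos hy
        refine ⟨(x - 2 * π * m, y - 2 * π * n), ⟨⟨?_, ?_⟩, ?_, ?_⟩, ?_⟩
        · dsimp only; linarith [hm.1]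
        · dsimp only; linarith [hm.2]
        · dsimp only; linarith [hn.1]
        · dsimp only; linarith [hn.2]
        · refine (Quot.sound ⟨-2 * m, -n, ?_, ?_⟩).symm
          · dsimp only; push_cast; ring
          · dsimp only
            rw [Even.neg_one_zpow ⟨-m, by ring⟩]
            push_cast; ring
      · obtain ⟨m, hm⟩ := exists_int_shift_sin_pos
          (show 0 < Real.sin (x - a + π) by rw [Real.sin_add_pi]; linarith)
        obtain ⟨n, hn⟩ := exists_int_shift_sin_pos
          (show 0 < Real.sin (-y) by rw [Real.sin_neg]; linarith)
        refine ⟨(x + (1 - 2 * m) * π, -y - 2 * π * n), ⟨⟨?_, ?_⟩, ?_, ?_⟩, ?_⟩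
        · dsimp only; have := hm.1; linarith
        · dsimp only; have := hm.2; linarith
        · dsimp only; linarith [hn.1]
        · dsimp only; linarith [hn.2]
        · refine (Quot.sound ⟨1 - 2 * m, -n, ?_, ?_⟩).symm
          · dsimp only; push_cast; ring
          · dsimp only
            rw [Odd.neg_one_zpow ⟨-m, by ring⟩]
            push_cast
            ring
    · rintro _ ⟨⟨x, y⟩, ⟨hx, hy⟩, rfl⟩
      dsimp only at hx hy
      refine ⟨(x, y), ?_, rfl⟩
      show 0 < f (x, y)
      rw [hfval]
      dsimp only
      have h1 : 0 < Real.sin (x - a) :=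
        Real.sin_pos_of_pos_of_lt_pi (by linarith [hx.1]) (by linarith [hx.2])
      have h2 : 0 < Real.sin y := Real.sin_pos_of_pos_of_lt_pi hy.1 hy.2
      exact mul_pos hR (mul_pos h1 h2)
  -- image of the negativity set is the image of N
  have himN : Quot.mk kleinRel '' {p : ℝ × ℝ | f p < 0} = Quot.mk kleinRel '' N := by
    apply Set.Subset.antisymm
    · rintro _ ⟨⟨x, y⟩, hp, rfl⟩
      have h0 : Real.sin (x - a) * Real.sin y < 0 := by
        have h1 : f (x, y) < 0 := hp
        rw [hfval (x, y)] at h1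
        dsimp only at h1
        nlinarith [h1, hR]
      rcases mul_neg_iff.mp h0 with ⟨hs, hy⟩ | ⟨hs, hy⟩
      · obtain ⟨m, hm⟩ := exists_int_shift_sin_pos hs
        obtain ⟨n, hn⟩ := exists_int_shift_sin_pos
          (show 0 < Real.sin (-y) by rw [Real.sin_neg]; linarith)
        refine ⟨(x - 2 * π * m, y + 2 * π * n), ⟨⟨?_, ?_⟩, ?_, ?_⟩, ?_⟩
        · dsimp only; linarith [hm.1]
        · dsimp only; linarith [hm.2]
        · dsimp only; linarith [hn.2]
        · dsimp only; linarith [hn.1]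
        · refine (Quot.sound ⟨-2 * m, n, ?_, ?_⟩).symm
          · dsimp only; push_cast; ring
          · dsimp only
            rw [Even.neg_one_zpow ⟨-m, by ring⟩]
            push_cast; ring
      · obtain ⟨m, hm⟩ := exists_int_shift_sin_pos
          (show 0 < Real.sin (x - a + π) by rw [Real.sin_add_pi]; linarith)
        obtain ⟨n, hn⟩ := exists_int_shift_sin_pos hy
        refine ⟨(x + (1 - 2 * m) * π, -y + 2 * π * n), ⟨⟨?_, ?_⟩, ?_, ?_⟩, ?_⟩
        · dsimp only; have := hm.1; linarith
        · dsimp only; have := hm.2; linarith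
        · dsimp only; linarith [hn.2]
        · dsimp only; linarith [hn.1]
        · refine (Quot.sound ⟨1 - 2 * m, n, ?_, ?_⟩).symm
          · dsimp only; push_cast; ring
          · dsimp only
            rw [Odd.neg_one_zpow ⟨-m, by ring⟩]
            push_cast
            ring
    · rintro _ ⟨⟨x, y⟩, ⟨hx, hy⟩, rfl⟩
      dsimp only at hx hy
      refine ⟨(x, y), ?_, rfl⟩
      show f (x, y) < 0
      rw [hfval]
      dsimp only
      have h1 : 0 < Real.sin (x - a) :=
        Real.sin_pos_of_pos_of_lt_pi (by linarith [hx.1]) (by linarith [hx.2])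
      have h2 : Real.sin y < 0 := Real.sin_neg_of_neg_of_neg_pi_lt hy.2 hy.1
      exact mul_neg_of_pos_of_neg hR (mul_neg_of_pos_of_neg h1 h2)
  -- splitting the nonzero set
  have hsplit : {p : ℝ × ℝ | f p ≠ 0} = {p : ℝ × ℝ | 0 < f p} ∪ {p : ℝ × ℝ | f p < 0} := by
    ext p
    simp only [Set.mem_setOf_eq, Set.mem_union]
    constructor
    · intro h
      exact (lt_or_gt_of_ne h).symm
    · rintro (h | h)
      exacts [ne_of_gt h, ne_of_lt h]
  show Nat.card (ConnectedComponents ↥(Quot.mk kleinRel '' {p : ℝ × ℝ | f p ≠ 0})) = 2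
  set Sset : Set KleinBottle := Quot.mk kleinRel '' {p : ℝ × ℝ | f p ≠ 0} with hSdef
  have hS : Sset = Quot.mk kleinRel '' P ∪ Quot.mk kleinRel '' N := by
    have e := Set.image_union (Quot.mk kleinRel) {p : ℝ × ℝ | 0 < f p} {p : ℝ × ℝ | f p < 0}
    rw [himP, himN] at e
    rw [hSdef, hsplit]
    exact e
  -- preconnectedness of the two pieces
  have hPc : IsPreconnected (Quot.mk kleinRel '' P) :=
    (((convex_Ioo a (a + π)).prod (convex_Ioo 0 π)).isPreconnected).image _
      continuous_quot_mk.continuousOn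
  have hNc : IsPreconnected (Quot.mk kleinRel '' N) :=
    (((convex_Ioo a (a + π)).prod (convex_Ioo (-π) 0)).isPreconnected).image _
      continuous_quot_mk.continuousOn
  -- two points lying in same preconnected subset of Sset have equal components
  have comp_eq : ∀ T : Set KleinBottle, IsPreconnected T → T ⊆ Sset →
      ∀ s t : ↥Sset, (s : KleinBottle) ∈ T → (t : KleinBottle) ∈ T →
        connectedComponent s = connectedComponent t := by
    intro T hT hTS s t hs ht
    have h1 : IsPreconnected ((Subtype.val : ↥Sset → KleinBottle) ⁻¹' T) := by
      apply Topology.IsInducing.subtypeVal.isPreconnected_image.mp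
      rwa [Subtype.image_preimage_coe, Set.inter_eq_right.mpr hTS]
    have h2 := h1.subset_connectedComponent (show s ∈ _ from hs)
    exact connectedComponent_eq (h2 ht)
  -- the two base points
  have hmemP : ((a + π / 2, π / 2) : ℝ × ℝ) ∈ P := by
    refine ⟨⟨?_, ?_⟩, ?_, ?_⟩ <;> dsimp only <;> linarith [pi_pos]
  have hmemN : ((a + π / 2, -(π / 2)) : ℝ × ℝ) ∈ N := by
    refine ⟨⟨?_, ?_⟩, ?_, ?_⟩ <;> dsimp only <;> linarith [pi_pos]
  have hfP1 : f (a + π / 2, π / 2) = R := by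
    rw [hfval]
    dsimp only
    rw [show a + π / 2 - a = π / 2 by ring, Real.sin_pi_div_two]
    ring
  have hfN1 : f (a + π / 2, -(π / 2)) = -R := by
    rw [hfval]
    dsimp only
    rw [show a + π / 2 - a = π / 2 by ring, Real.sin_pi_div_two, Real.sin_neg,
      Real.sin_pi_div_two]
    ring
  have hmemP1 : Quot.mk kleinRel ((a + π / 2, π / 2) : ℝ × ℝ) ∈ Sset :=
    Set.mem_image_of_mem _ (show f (a + π / 2, π / 2) ≠ 0 by rw [hfP1]; exact hR.ne')
  have hmemN1 : Quot.mk kleinRel ((a + π / 2, -(π / 2)) : ℝ × ℝ) ∈ Sset :=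
    Set.mem_image_of_mem _ (show f (a + π / 2, -(π / 2)) ≠ 0 by rw [hfN1]; simpa using hR.ne')
  let sP1 : ↥Sset := ⟨_, hmemP1⟩
  let sN1 : ↥Sset := ⟨_, hmemN1⟩
  -- every component is one of the two
  have hdich : ∀ s : ↥Sset, connectedComponent s = connectedComponent sP1 ∨
      connectedComponent s = connectedComponent sN1 := by
    intro s
    have hmem : (s : KleinBottle) ∈ Quot.mk kleinRel '' P ∪ Quot.mk kleinRel '' N := by
      rw [← hS]; exact s.2
    rcases hmem with h | h
    · left
      exact comp_eq _ hPc (by rw [hS]; exact Set.subset_union_left) s sP1 h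
        (Set.mem_image_of_mem _ hmemP)
    · right
      exact comp_eq _ hNc (by rw [hS]; exact Set.subset_union_right) s sN1 h
        (Set.mem_image_of_mem _ hmemN)
  -- U never vanishes on Sset
  have hUne : ∀ s : ↥Sset, U (s : KleinBottle) ≠ 0 := by
    intro s
    obtain ⟨p, hp, hpe⟩ := s.2
    rw [← hpe]
    exact hp
  -- the two components are distinct
  have hcompne : connectedComponent sP1 ≠ connectedComponent sN1 := by
    intro h
    have hmemN1' : sN1 ∈ connectedComponent sP1 := by
      rw [h]; exact mem_connectedComponent
    have hIVT := (isPreconnected_connectedComponent (x := sP1)).intermediate_value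
      (f := fun s : ↥Sset => U (s : KleinBottle)) hmemN1' mem_connectedComponent
      ((hUc.comp continuous_subtype_val).continuousOn)
    have h0mem : (0 : ℝ) ∈ Set.Icc (U (sN1 : KleinBottle)) (U (sP1 : KleinBottle)) := by
      rw [show U (sN1 : KleinBottle) = -R from hfN1, show U (sP1 : KleinBottle) = R from hfP1]
      exact ⟨by linarith, by linarith⟩
    obtain ⟨x, -, hx0⟩ := hIVT h0mem
    exact hUne x hx0
  -- conclude
  rw [Nat.card_eq_two_iff]
  refine ⟨(sP1 : ConnectedComponents ↥Sset), (sN1 : ConnectedComponents ↥Sset), ?_, ?_⟩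
  · simp only [ne_eq, ConnectedComponents.coe_eq_coe]
    exact fun h => hcompne (ConnectedComponents.coe_eq_coe.mp h)
  · apply Set.eq_univ_of_forall
    intro c
    obtain ⟨s, rfl⟩ := ConnectedComponents.surjective_coe c
    exact (hdich s).imp ConnectedComponents.coe_eq_coe.mpr ConnectedComponents.coe_eq_coe.mpr

/-- every eigenfunction `u(x,y) = (A cos x + B sin x) sin y`,
`(A,B) ≠ (0,0)`, of `K_1` with eigenvalue `2` has exactly two nodal domains;
consequently `λ₃(K_1) = 2` is not Courant-sharp (its label `3` is not attained). -/
theorem lambda3_two_nodal_domains_not_courant_sharp (A B : ℝ) (hAB : (A, B) ≠ (0, 0)) :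
    Nat.card (ConnectedComponents
        ↥(Quot.mk kleinRel ''
          {p : ℝ × ℝ | (A * Real.cos p.1 + B * Real.sin p.1) * Real.sin p.2 ≠ 0})) = 2 ∧
    Nat.card (ConnectedComponents
        ↥(Quot.mk kleinRel ''
          {p : ℝ × ℝ | (A * Real.cos p.1 + B * Real.sin p.1) * Real.sin p.2 ≠ 0})) ≠ 3 := by
  have hAB' : ¬(A = 0 ∧ B = 0) := by
    intro h
    exact hAB (by rw [h.1, h.2])
  obtain ⟨R, hR, a, hg⟩ : ∃ R : ℝ, 0 < R ∧ ∃ a : ℝ, ∀ x : ℝ,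
      A * Real.cos x + B * Real.sin x = R * Real.sin (x - a) := by
    have hz0 : (⟨B, -A⟩ : ℂ) ≠ 0 := by
      intro h
      rw [Complex.ext_iff] at h
      exact hAB' ⟨neg_eq_zero.mp h.2, h.1⟩
    have hre : (⟨B, -A⟩ : ℂ).re = B := rfl
    have him : (⟨B, -A⟩ : ℂ).im = -A := rfl
    refine ⟨‖(⟨B, -A⟩ : ℂ)‖, norm_pos_iff.mpr hz0, Complex.arg ⟨B, -A⟩, ?_⟩
    intro x
    have hc := Complex.cos_arg hz0
    have hs := Complex.sin_arg (⟨B, -A⟩ : ℂ)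
    rw [hre] at hc
    rw [him] at hs
    have hRne : ‖(⟨B, -A⟩ : ℂ)‖ ≠ 0 := (norm_pos_iff.mpr hz0).ne'
    rw [Real.sin_sub, hc, hs]
    field_simp
    ring
  have hcard := klein_two_components A B R a hR hg
  exact ⟨hcard, by rw [hcard]; norm_num⟩
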